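/- With Leontief utilities, let P* and P be two profiles and let q be a distribution that maximizes the Nash product at P*. If for every agent i the set of critical alternatives of i under q with respect to P* equals the set of critical alternatives of i under q with respect to P, then q also maximizes the Nash product at P. -/

import Mathlib

open Filter Topology

/-- Leontief utility of an agent with peak `p` at distribution `q`:
the minimum of `q j / p j` over alternatives `j` with `p j > 0`. -/
noncomputable def leontief {m : ℕ} (p q : Fin m → ℝ) : ℝ :=
  sInf {x : ℝ | ∃ j, 0 < p j ∧ x = q j / p j}

-- The set of critical alternatives of an agent with peak `p` under distribution `q`:
-- the alternatives attaining the minimum of `q j / p j` over `j` with `p j > 0`.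
open Classical in
noncomputable def criticalSet {m : ℕ} (p q : Fin m → ℝ) : Finset (Fin m) :=
  Finset.univ.filter (fun j => 0 < p j ∧ ∀ k, 0 < p k → q j / p j ≤ q k / p k)

/-- `q` maximizes the Nash product of Leontief utilities at profile `P`. -/
def NashMax {m n : ℕ} (P : Fin n → Fin m → ℝ) (q : Fin m → ℝ) : Prop :=
  q ∈ stdSimplex ℝ (Fin m) ∧
    ∀ q' ∈ stdSimplex ℝ (Fin m), ∏ i, leontief (P i) q' ≤ ∏ i, leontief (P i) q

section aux
variable {m : ℕ}

lemma lset_finite (p q : Fin m → ℝ) : {x : ℝ | ∃ j, 0 < p j ∧ x = q j / p j}.Finite :=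
  (Set.finite_range (fun j => q j / p j)).subset (by rintro x ⟨j, _, rfl⟩; exact ⟨j, rfl⟩)

lemma exists_pos_peak {p : Fin m → ℝ} (hp : p ∈ stdSimplex ℝ (Fin m)) : ∃ j, 0 < p j := by
  by_contra h
  push_neg at h
  have h2 : ∑ j, p j ≤ 0 := Finset.sum_nonpos (fun j _ => h j)
  rw [hp.2] at h2; linarith

lemma lset_nonempty {p : Fin m → ℝ} (q : Fin m → ℝ) (hp : ∃ j, 0 < p j) :
    {x : ℝ | ∃ j, 0 < p j ∧ x = q j / p j}.Nonempty := by
  obtain ⟨j, hj⟩ := hp; exact ⟨q j / p j, j, hj, rfl⟩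

lemma leontief_le {p : Fin m → ℝ} (q : Fin m → ℝ) {k} (hk : 0 < p k) :
    leontief p q ≤ q k / p k :=
  csInf_le (lset_finite p q).bddBelow ⟨k, hk, rfl⟩

lemma le_leontief {p : Fin m → ℝ} (q : Fin m → ℝ) (hp : ∃ j, 0 < p j) {c : ℝ}
    (h : ∀ k, 0 < p k → c ≤ q k / p k) : c ≤ leontief p q :=
  le_csInf (lset_nonempty q hp) (by rintro x ⟨j, hj, rfl⟩; exact h j hj)

lemma mem_criticalSet {p q : Fin m → ℝ} {j} :
    j ∈ criticalSet p q ↔ 0 < p j ∧ ∀ k, 0 < p k → q j / p j ≤ q k / p k := by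
  classical
  simp [criticalSet]

lemma exists_critical {p : Fin m → ℝ} (q : Fin m → ℝ) (hp : ∃ j, 0 < p j) :
    ∃ j ∈ criticalSet p q, leontief p q = q j / p j := by
  have hmem := Set.Nonempty.csInf_mem (lset_nonempty q hp) (lset_finite p q)
  obtain ⟨j, hj, heq⟩ := hmem
  refine ⟨j, mem_criticalSet.mpr ⟨hj, fun k hk => ?_⟩, heq⟩
  rw [← heq]; exact leontief_le q hk

lemma leontief_eq_critical {p q : Fin m → ℝ} {j} (hp : ∃ k, 0 < p k)
    (hj : j ∈ criticalSet p q) : leontief p q = q j / p j := by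
  obtain ⟨j0, hj0, heq⟩ := exists_critical q hp
  rw [mem_criticalSet] at hj hj0
  exact le_antisymm (leontief_le q hj.1) (by rw [heq]; exact hj.2 j0 hj0.1)

lemma leontief_nonneg {p q : Fin m → ℝ} (hp : ∃ j, 0 < p j) (hq : ∀ j, 0 ≤ q j) :
    0 ≤ leontief p q :=
  le_leontief q hp (fun k hk => div_nonneg (hq k) hk.le)

end aux

/-- with Leontief utilities, if `q` maximizes the Nash product at `P*`
and every agent has the same critical alternatives under `q` with respect to `P*` and
to `P`, then `q` also maximizes the Nash product at `P`. -/
theorem nash_max_transfer {m n : ℕ}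
    (Pstar P : Fin n → Fin m → ℝ)
    (hPstar : ∀ i, Pstar i ∈ stdSimplex ℝ (Fin m))
    (hP : ∀ i, P i ∈ stdSimplex ℝ (Fin m))
    (q : Fin m → ℝ) (hmax : NashMax Pstar q)
    (hcrit : ∀ i, criticalSet (Pstar i) q = criticalSet (P i) q) :
    NashMax P q := by
  classical
  obtain ⟨hq, hmaxs⟩ := hmax
  refine ⟨hq, fun q' hq' => ?_⟩
  by_contra hlt
  push_neg at hlt
  have hsupStar : ∀ i, ∃ j, 0 < Pstar i j := fun i => exists_pos_peak (hPstar i)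
  have hsupP : ∀ i, ∃ j, 0 < P i j := fun i => exists_pos_peak (hP i)
  -- m is positive
  have hm : 0 < m := by
    rcases Nat.eq_zero_or_pos m with rfl | h
    · have := hq.2; simp at this
    · exact h
  -- the uniform distribution
  set c : Fin m → ℝ := fun _ => (m : ℝ)⁻¹ with hc_def
  have hmR : (0:ℝ) < m := by exact_mod_cast hm
  have hc : c ∈ stdSimplex ℝ (Fin m) := by
    constructor
    · intro j; positivity
    · simp [hc_def, Finset.sum_const, Finset.card_univ]
      field_simp
  -- the Nash product of Pstar at q is positive
  have hstar_c_pos : ∀ i, 0 < leontief (Pstar i) c := by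
    intro i
    obtain ⟨j, hj, heq⟩ := exists_critical c (hsupStar i)
    rw [mem_criticalSet] at hj
    rw [heq]; exact div_pos (by positivity) hj.1
  have hFq_pos : 0 < ∏ i, leontief (Pstar i) q :=
    lt_of_lt_of_le (Finset.prod_pos (fun i _ => hstar_c_pos i)) (hmaxs c hc)
  have hstar_q_pos : ∀ i, 0 < leontief (Pstar i) q := by
    intro i
    rcases lt_or_eq_of_le (leontief_nonneg (hsupStar i) hq.1) with h | h
    · exact h
    · exfalso
      rw [Finset.prod_eq_zero (Finset.mem_univ i) h.symm] at hFq_pos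
      exact lt_irrefl 0 hFq_pos
  -- positivity of q on critical sets
  have hqpos : ∀ i, ∀ j ∈ criticalSet (Pstar i) q, 0 < q j := by
    intro i j hj
    have hpj := (mem_criticalSet.mp hj).1
    have := hstar_q_pos i
    rw [leontief_eq_critical (hsupStar i) hj] at this
    exact (div_pos_iff.mp this).resolve_right (fun h => absurd hpj (not_lt.mpr h.2.le)) |>.1
  -- Leontief for P at q is positive
  have hPq_pos : ∀ i, 0 < leontief (P i) q := by
    intro i
    obtain ⟨j, hj, _⟩ := exists_critical q (hsupStar i)
    have hjP : j ∈ criticalSet (P i) q := (hcrit i) ▸ hj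
    rw [leontief_eq_critical (hsupP i) hjP]
    exact div_pos (hqpos i j hj) (mem_criticalSet.mp hjP).1
  have hFPq_pos : 0 < ∏ i, leontief (P i) q := Finset.prod_pos (fun i _ => hPq_pos i)
  -- critical sets are nonempty
  have hcritne : ∀ i, (criticalSet (Pstar i) q).Nonempty := by
    intro i; obtain ⟨j, hj, _⟩ := exists_critical q (hsupStar i); exact ⟨j, hj⟩
  -- define rho and s
  set ρ : Fin n → ℝ := fun i => (criticalSet (Pstar i) q).inf' (hcritne i) (fun j => q' j / q j)
    with hρ_def
  set s : Fin n → ℝ := fun i => ρ i - 1 with hs_def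
  have hρ_nonneg : ∀ i, 0 ≤ ρ i := by
    intro i
    apply Finset.le_inf'
    intro j hj
    exact div_nonneg (hq'.1 j) (hqpos i j hj).le
  have hρ_le : ∀ i, ∀ j ∈ criticalSet (Pstar i) q, ρ i ≤ q' j / q j := by
    intro i j hj; exact Finset.inf'_le _ hj
  -- key bound: leontief (P i) q' ≤ ρ i * leontief (P i) q
  have hkey : ∀ i, leontief (P i) q' ≤ ρ i * leontief (P i) q := by
    intro i
    obtain ⟨j, hj, hjeq⟩ := Finset.exists_mem_eq_inf' (hcritne i) (fun j => q' j / q j)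
    have hjP : j ∈ criticalSet (P i) q := (hcrit i) ▸ hj
    have hpj := (mem_criticalSet.mp hjP).1
    have hqj := hqpos i j hj
    have h1 : leontief (P i) q' ≤ q' j / P i j := leontief_le q' hpj
    have h2 : leontief (P i) q = q j / P i j := leontief_eq_critical (hsupP i) hjP
    have hjeq' : ρ i = q' j / q j := hjeq
    calc leontief (P i) q' ≤ q' j / P i j := h1
      _ = (q' j / q j) * (q j / P i j) := by
          rw [div_mul_div_comm, mul_comm (q' j) (q j),
            mul_div_mul_left _ _ (ne_of_gt hqj)]
      _ = ρ i * leontief (P i) q := by rw [hjeq', h2]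
  -- product of rho exceeds 1
  have hρprod : 1 < ∏ i, ρ i := by
    have h1 : ∏ i, leontief (P i) q' ≤ ∏ i, (ρ i * leontief (P i) q) :=
      Finset.prod_le_prod (fun i _ => (leontief_nonneg (hsupP i) hq'.1)) (fun i _ => hkey i)
    rw [Finset.prod_mul_distrib] at h1
    have h2 : ∏ i, leontief (P i) q < (∏ i, ρ i) * ∏ i, leontief (P i) q :=
      lt_of_lt_of_le hlt h1
    nlinarith [hFPq_pos]
  -- sum of s is positive
  have hS : 0 < ∑ i, s i := by
    by_contra h
    push_neg at h
    have h1 : ∏ i, ρ i ≤ ∏ i, Real.exp (s i) :=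
      Finset.prod_le_prod (fun i _ => hρ_nonneg i)
        (fun i _ => by simpa [hs_def] using Real.add_one_le_exp (ρ i - 1))
    rw [← Real.exp_sum] at h1
    have h2 : Real.exp (∑ i, s i) ≤ 1 := by
      rw [← Real.exp_zero]
      exact Real.exp_le_exp.mpr h
    linarith
  have hs_lb : ∀ i, -1 ≤ s i := fun i => by
    have := hρ_nonneg i; simp [hs_def]; linarith
  -- derivative of the product at 0
  have hderiv : ∀ u : Finset (Fin n),
      HasDerivAt (fun t : ℝ => ∏ i ∈ u, (1 + t * s i)) (∑ i ∈ u, s i) 0 := by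
    intro u
    induction u using Finset.induction with
    | empty => simpa using hasDerivAt_const (0:ℝ) (1:ℝ)
    | @insert a u ha ih =>
      have hbase : HasDerivAt (fun t : ℝ => 1 + t * s a) (s a) 0 := by
        simpa using (hasDerivAt_mul_const (s a)).const_add (1:ℝ)
      have hmul : HasDerivAt (fun t : ℝ => (1 + t * s a) * ∏ i ∈ u, (1 + t * s i))
          (s a * ∏ i ∈ u, (1 + 0 * s i) + (1 + 0 * s a) * ∑ i ∈ u, s i) 0 := hbase.mul ih
      have heq : (fun t : ℝ => ∏ i ∈ insert a u, (1 + t * s i)) =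
          fun t => (1 + t * s a) * ∏ i ∈ u, (1 + t * s i) := by
        funext t; rw [Finset.prod_insert ha]
      rw [heq, Finset.sum_insert ha]
      convert hmul using 1
      simp
  have hf := hderiv Finset.univ
  -- eventually the product exceeds 1
  have hev1 : ∀ᶠ t in 𝓝[>] (0:ℝ), 1 < ∏ i, (1 + t * s i) := by
    have hslope := hasDerivAt_iff_tendsto_slope.mp hf
    have h1 : ∀ᶠ t in 𝓝[≠] (0:ℝ), 0 < slope (fun t : ℝ => ∏ i, (1 + t * s i)) 0 t :=
      hslope.eventually (eventually_gt_nhds hS)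
    have h2 : ∀ᶠ t in 𝓝[>] (0:ℝ), 0 < slope (fun t : ℝ => ∏ i, (1 + t * s i)) 0 t :=
      h1.filter_mono (nhdsWithin_mono 0 (fun x hx => ne_of_gt hx))
    have h3 : ∀ᶠ t in 𝓝[>] (0:ℝ), 0 < t := self_mem_nhdsWithin
    filter_upwards [h2, h3] with t ht htpos
    rw [slope_def_field] at ht
    simp only [sub_zero] at ht
    have : 0 < (∏ i, (1 + t * s i)) - ∏ i, ((1:ℝ) + 0 * s i) := by
      by_contra hcon
      push_neg at hcon
      have := div_nonpos_of_nonpos_of_nonneg hcon htpos.le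
      linarith
    simp at this
    linarith
  -- eventually each Leontief utility under Pstar grows by factor (1 + t * s i)
  have hC : ∀ i, ∀ᶠ t in 𝓝[>] (0:ℝ),
      leontief (Pstar i) q * (1 + t * s i) ≤
        leontief (Pstar i) (fun j => q j + t * (q' j - q j)) := by
    intro i
    have hjall : ∀ j : Fin m, ∀ᶠ t in 𝓝[>] (0:ℝ), 0 < Pstar i j →
        leontief (Pstar i) q * (1 + t * s i) ≤ (q j + t * (q' j - q j)) / Pstar i j := by
      intro j
      by_cases hpj : 0 < Pstar i j
      · by_cases hjc : j ∈ criticalSet (Pstar i) q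
        · -- critical case: holds for all t > 0
          have hueq : leontief (Pstar i) q = q j / Pstar i j :=
            leontief_eq_critical (hsupStar i) hjc
          have hqj : 0 < q j := hqpos i j hjc
          have hρj : ρ i ≤ q' j / q j := hρ_le i j hjc
          filter_upwards [self_mem_nhdsWithin] with t ht _
          have htpos : 0 < t := ht
          rw [hueq, div_mul_eq_mul_div, div_le_div_iff_of_pos_right hpj]
          have hmul : ρ i * q j ≤ q' j := (le_div_iff₀ hqj).mp hρj
          rw [show s i = ρ i - 1 from rfl]
          nlinarith [mul_le_mul_of_nonneg_left hmul htpos.le]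
        · -- non-critical case: strict inequality at 0, continuity
          have hstrict : leontief (Pstar i) q < q j / Pstar i j := by
            rcases lt_or_eq_of_le (leontief_le q hpj) with h | h
            · exact h
            · exfalso
              exact hjc (mem_criticalSet.mpr ⟨hpj, fun k hk => by
                rw [← h]; exact leontief_le q hk⟩)
          have hF : ContinuousAt (fun t : ℝ => leontief (Pstar i) q * (1 + t * s i)) 0 := by
            fun_prop
          have hG : ContinuousAt (fun t : ℝ => (q j + t * (q' j - q j)) / Pstar i j) 0 := by
            fun_prop
          have h0 : (fun t : ℝ => leontief (Pstar i) q * (1 + t * s i)) 0 <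
              (fun t : ℝ => (q j + t * (q' j - q j)) / Pstar i j) 0 := by
            simpa using hstrict
          have hev := hF.eventually_lt hG h0
          exact (hev.filter_mono nhdsWithin_le_nhds).mono (fun t h _ => h.le)
      · exact Filter.Eventually.of_forall (fun t h => absurd h hpj)
    have hall := Filter.eventually_all.mpr hjall
    filter_upwards [hall] with t ht
    exact le_leontief _ (hsupStar i) (fun k hk => ht k hk)
  -- combine everything
  have hcomb : ∀ᶠ t in 𝓝[>] (0:ℝ),
      (∀ i, leontief (Pstar i) q * (1 + t * s i) ≤
        leontief (Pstar i) (fun j => q j + t * (q' j - q j))) ∧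
      1 < (∏ i, (1 + t * s i)) ∧ t ∈ Set.Ioo (0:ℝ) 1 := by
    refine ((Filter.eventually_all.mpr hC).and (hev1.and ?_))
    exact Ioo_mem_nhdsGT_of_mem ⟨le_refl 0, zero_lt_one⟩
  obtain ⟨t, h1, h2, ht0, ht1⟩ := hcomb.exists
  -- the perturbed point is in the simplex
  have hqt : (fun j => q j + t * (q' j - q j)) ∈ stdSimplex ℝ (Fin m) := by
    constructor
    · intro j
      have ha := hq.1 j; have hb := hq'.1 j
      show 0 ≤ q j + t * (q' j - q j)
      nlinarith
    · have : ∑ j, (q j + t * (q' j - q j)) =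
          ∑ j, q j + t * (∑ j, q' j - ∑ j, q j) := by
        rw [Finset.sum_add_distrib, ← Finset.mul_sum, Finset.sum_sub_distrib]
      rw [this, hq.2, hq'.2]; ring
  -- contradiction with maximality at Pstar
  have hfac_nonneg : ∀ i, 0 ≤ 1 + t * s i := by
    intro i
    have := hs_lb i
    nlinarith
  have hchain : ∏ i, leontief (Pstar i) q <
      ∏ i, leontief (Pstar i) (fun j => q j + t * (q' j - q j)) := by
    calc ∏ i, leontief (Pstar i) q
        < (∏ i, leontief (Pstar i) q) * ∏ i, (1 + t * s i) := by nlinarith [hFq_pos]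
      _ = ∏ i, (leontief (Pstar i) q * (1 + t * s i)) := (Finset.prod_mul_distrib).symm
      _ ≤ ∏ i, leontief (Pstar i) (fun j => q j + t * (q' j - q j)) :=
          Finset.prod_le_prod
            (fun i _ => mul_nonneg (hstar_q_pos i).le (hfac_nonneg i))
            (fun i _ => h1 i)
  exact absurd (hmaxs _ hqt) (not_le.mpr hchain)
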